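/- arXiv:2109.06170 — 3 statements merged into one kernel-verified Lean document; each statement's English description precedes it below -/
import Mathlib

section
/- Let m ≥ d+1, τ > 0, R > 0. Then as ε → 0⁺, ∫_{B'_R ⊂ ℝ^{d−1}} |x'|² dx' / (ε + τ|x'|^m) = (d−1) M₂ ρ₂(ε) (1 + o(1)), where M₂ = ω_{d−1} Γ[(d+1)/m] / (m τ^{(d+1)/m}) with Γ[(d+1)/m] = Γ(1 − (d+1)/m)Γ((d+1)/m) if m > d+1 and Γ[(d+1)/m] = 1 if m = d+1, and ρ₂(ε) = ε^{(d+1)/m − 1} if m > d+1 and ρ₂(ε) = |ln ε| if m = d+1. -/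
open MeasureTheory Filter


namespace GapAsymptotics

open Set Real

theorem cont_rpow (b : ℝ) (hb : 0 ≤ b) : Continuous (fun r : ℝ => r ^ b) :=
  continuous_iff_continuousAt.2 fun x => Real.continuousAt_rpow_const x b (Or.inr hb)

theorem realBeta (a : ℝ) (h0 : 0 < a) (h1 : a < 1) :
    ∫ x in Ioo (0:ℝ) 1, x ^ (a-1) * (1-x) ^ (-a) = Real.Gamma a * Real.Gamma (1-a) := by
  have hc : Complex.Gamma a * Complex.Gamma (1-(a:ℂ)) = Complex.betaIntegral a (1-a) := by
    have := Complex.Gamma_mul_Gamma_eq_betaIntegral (s := (a:ℂ)) (t := 1-(a:ℂ))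
      (by simpa using h0) (by simp [Complex.sub_re]; linarith)
    simpa [Complex.Gamma_one] using this
  have hβ : Complex.betaIntegral a (1-a)
      = ((∫ x in Ioo (0:ℝ) 1, x ^ (a-1) * (1-x) ^ (-a) : ℝ) : ℂ) := by
    rw [Complex.betaIntegral, intervalIntegral.integral_of_le zero_le_one,
      integral_Ioc_eq_integral_Ioo]
    calc (∫ x : ℝ in Ioo (0:ℝ) 1, (x:ℂ) ^ ((a:ℂ) - 1) * (1 - (x:ℂ)) ^ (1 - (a:ℂ) - 1))
        = ∫ x : ℝ in Ioo (0:ℝ) 1, ((x ^ (a-1) * (1-x) ^ (-a) : ℝ) : ℂ) := by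
          refine setIntegral_congr_fun measurableSet_Ioo (fun x hx => ?_)
          have hx0 : (0:ℝ) ≤ x := hx.1.le
          have hx1 : (0:ℝ) ≤ 1 - x := by linarith [hx.2]
          rw [Complex.ofReal_mul, Complex.ofReal_cpow hx0, Complex.ofReal_cpow hx1]
          push_cast
          ring_nf
      _ = _ := integral_ofReal
  have := hc.trans hβ
  rw [← Complex.ofReal_one, ← Complex.ofReal_sub, Complex.Gamma_ofReal,
    Complex.Gamma_ofReal, ← Complex.ofReal_mul] at this
  exact (Complex.ofReal_inj.mp this).symm

theorem mellinOneAdd (a : ℝ) (h0 : 0 < a) (h1 : a < 1) :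
    ∫ t in Ioi (0:ℝ), t ^ (a-1) / (1+t) = Real.Gamma a * Real.Gamma (1-a) := by
  have key : ∫ t in Ioi (0:ℝ), t ^ (a-1) / (1+t)
      = ∫ x in Ioo (0:ℝ) 1, x ^ (a-1) * (1-x) ^ (-a) := by
    have himg : (fun x : ℝ => x / (1-x)) '' Ioo 0 1 = Ioi 0 := by
      ext t
      constructor
      · rintro ⟨x, hx, rfl⟩
        exact div_pos hx.1 (by linarith [hx.2])
      · intro ht
        refine ⟨t / (1+t), ⟨div_pos ht (by linarith [mem_Ioi.mp ht]), ?_⟩, ?_⟩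
        · rw [div_lt_one (by linarith [mem_Ioi.mp ht])]; linarith [mem_Ioi.mp ht]
        · have h1t : (0:ℝ) < 1 + t := by linarith [mem_Ioi.mp ht]
          field_simp
          ring
    have hderiv : ∀ x ∈ Ioo (0:ℝ) 1,
        HasDerivWithinAt (fun x : ℝ => x / (1-x)) (((1-x)^2)⁻¹) (Ioo 0 1) x := by
      intro x hx
      have hne : (1:ℝ) - x ≠ 0 := by linarith [hx.2]
      have := (hasDerivAt_id x).div ((hasDerivAt_id x).const_sub 1) hne
      refine this.hasDerivWithinAt.congr_deriv ?_
      simp only [id_eq]; ring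
    have hinj : InjOn (fun x : ℝ => x / (1-x)) (Ioo 0 1) := by
      intro x hx y hy h
      have hnx : (1:ℝ) - x ≠ 0 := by linarith [hx.2]
      have hny : (1:ℝ) - y ≠ 0 := by linarith [hy.2]
      field_simp at h
      linarith
    have := integral_image_eq_integral_abs_deriv_smul measurableSet_Ioo hderiv hinj
      (fun t => t ^ (a-1) / (1+t))
    rw [himg] at this
    rw [this]
    refine setIntegral_congr_fun measurableSet_Ioo (fun x hx => ?_)
    have hx0 : 0 < x := hx.1
    have hu : 0 < 1 - x := by linarith [hx.2]
    have h1d : 1 + x / (1-x) = (1-x)⁻¹ := by field_simp; ring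
    rw [smul_eq_mul, h1d, Real.div_rpow hx0.le hu.le, abs_of_pos (by positivity)]
    have hxa : (0:ℝ) < x ^ (a-1) := Real.rpow_pos_of_pos hx0 _
    have hua : (0:ℝ) < (1-x) ^ (a-1) := Real.rpow_pos_of_pos hu _
    have key : ((1:ℝ)-x) ^ (-a) = (((1-x):ℝ)^(2:ℕ))⁻¹ * (((1-x):ℝ)^(a-1))⁻¹ * (1-x) := by
      rw [show -a = -(((2:ℕ):ℝ)) + (-(a-1)) + 1 by push_cast; ring, Real.rpow_add hu,
        Real.rpow_add hu, Real.rpow_one, Real.rpow_neg hu.le, Real.rpow_neg hu.le,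
        Real.rpow_natCast]
    rw [key]
    field_simp
  rw [key]
  exact realBeta a h0 h1

theorem Jval (b m : ℝ) (hb : 0 ≤ b) (hm : b + 1 < m) :
    ∫ u in Ioi (0:ℝ), u ^ b / (1 + u ^ m)
      = Real.Gamma ((b+1)/m) * Real.Gamma (1-(b+1)/m) / m := by
  have hm0 : (0:ℝ) < m := by linarith
  set p : ℝ := (b+1)/m with hp
  have hp0 : 0 < p := by positivity
  have hp1 : p < 1 := by rw [hp, div_lt_one hm0]; linarith
  have mellin : ∫ t in Ioi (0:ℝ), t ^ (p-1) / (1+t) = Real.Gamma p * Real.Gamma (1-p) :=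
    mellinOneAdd p hp0 hp1
  have sub := integral_comp_rpow_Ioi (fun y => y ^ (p-1) / (1+y)) (ne_of_gt hm0)
  rw [mellin] at sub
  have congr1 : ∫ x in Ioi (0:ℝ), (|m| * x ^ (m - 1)) • ((x ^ m) ^ (p-1) / (1 + x ^ m))
      = ∫ x in Ioi (0:ℝ), m * (x ^ b / (1 + x ^ m)) := by
    refine setIntegral_congr_fun measurableSet_Ioi (fun x hx => ?_)
    have hx0 : (0:ℝ) < x := hx
    have hxx : x ^ (m-1) * x ^ (m*(p-1)) = x ^ b := by
      rw [← Real.rpow_add hx0]; congr 1; rw [hp]; field_simp; ring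
    rw [smul_eq_mul, abs_of_pos hm0, ← Real.rpow_mul hx0.le, ← hxx]; ring
  rw [congr1, integral_const_mul] at sub
  rw [eq_div_iff (ne_of_gt hm0), mul_comm _ m, sub]

theorem scaling (b m τ ε : ℝ) (hb : 0 ≤ b) (hm : b + 1 < m) (hτ : 0 < τ) (hε : 0 < ε) :
    ∫ r in Ioi (0:ℝ), r ^ b / (ε + τ * r ^ m)
      = ε ^ ((b+1)/m - 1) * τ ^ (-((b+1)/m)) * ∫ u in Ioi (0:ℝ), u ^ b / (1 + u ^ m) := by
  have hm0 : (0:ℝ) < m := by linarith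
  set c : ℝ := (ε/τ) ^ (1/m) with hc
  have hc0 : 0 < c := Real.rpow_pos_of_pos (div_pos hε hτ) _
  have hcm : τ * c ^ m = ε := by
    rw [hc, ← Real.rpow_mul (div_pos hε hτ).le, one_div_mul_cancel hm0.ne', Real.rpow_one]
    field_simp
  have sub := integral_comp_mul_left_Ioi (fun r => r ^ b / (ε + τ * r ^ m)) 0 hc0
  rw [mul_zero] at sub
  have congr1 : ∫ x in Ioi (0:ℝ), (c * x) ^ b / (ε + τ * (c * x) ^ m)
      = ∫ x in Ioi (0:ℝ), (c ^ b / ε) * (x ^ b / (1 + x ^ m)) := by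
    refine setIntegral_congr_fun measurableSet_Ioi (fun x hx => ?_)
    have hx0 : (0:ℝ) < x := hx
    rw [Real.mul_rpow hc0.le hx0.le, Real.mul_rpow hc0.le hx0.le]
    rw [show ε + τ * (c ^ m * x ^ m) = ε * (1 + x ^ m) by rw [← mul_assoc, hcm]; ring]
    have h1 : (0:ℝ) < 1 + x ^ m := by positivity
    field_simp
  rw [congr1, integral_const_mul, smul_eq_mul] at sub
  have hX : ∫ r in Ioi (0:ℝ), r ^ b / (ε + τ * r ^ m)
      = c * ((c ^ b / ε) * ∫ u in Ioi (0:ℝ), u ^ b / (1 + u ^ m)) := by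
    rw [sub, ← mul_assoc, mul_inv_cancel₀ hc0.ne', one_mul]
  have hcb : c ^ (b+1) = ε ^ ((b+1)/m) * τ ^ (-((b+1)/m)) := by
    rw [hc, ← Real.rpow_mul (div_pos hε hτ).le, show 1/m*(b+1) = (b+1)/m by ring,
      Real.div_rpow hε.le hτ.le, Real.rpow_neg hτ.le, div_eq_mul_inv]
  rw [hX, ← mul_assoc]
  congr 1
  have h2 : c * (c ^ b / ε) = c ^ (b+1) / ε := by
    rw [show b+1 = 1+b by ring, Real.rpow_add hc0, Real.rpow_one]; ring
  rw [h2, hcb, Real.rpow_sub hε, Real.rpow_one]; ring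

theorem meas_f (b m τ ε : ℝ) (hb : 0 ≤ b) (hm : 0 ≤ m) :
    Measurable (fun r : ℝ => r ^ b / (ε + τ * r ^ m)) :=
  (cont_rpow b hb).measurable.div
    (measurable_const.add (measurable_const.mul (cont_rpow m hm).measurable))

theorem integ_tail (b m τ ε R : ℝ) (hb : 0 ≤ b) (hm : b + 1 < m) (hτ : 0 < τ)
    (hε : 0 ≤ ε) (hR : 0 < R) :
    IntegrableOn (fun r : ℝ => r ^ b / (ε + τ * r ^ m)) (Ioi R) := by
  have hg : IntegrableOn (fun r : ℝ => τ⁻¹ * r ^ (b - m)) (Ioi R) :=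
    (integrableOn_Ioi_rpow_of_lt (by linarith) hR).const_mul _
  refine Integrable.mono' hg ((meas_f b m τ ε hb (by linarith)).aestronglyMeasurable) ?_
  filter_upwards [ae_restrict_mem measurableSet_Ioi] with r hr
  have hr0 : (0:ℝ) < r := hR.trans hr
  have hrm : (0:ℝ) < τ * r ^ m := by positivity
  have h1 : r ^ b / (ε + τ * r ^ m) ≤ r ^ b / (τ * r ^ m) :=
    div_le_div_of_nonneg_left (Real.rpow_nonneg hr0.le _) hrm (by linarith)
  have h2 : r ^ b / (τ * r ^ m) = τ⁻¹ * r ^ (b - m) := by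
    rw [Real.rpow_sub hr0]; field_simp
  rw [Real.norm_eq_abs, abs_of_nonneg (by positivity)]
  rw [← h2]; exact h1

theorem tail_nonneg (b m τ ε R : ℝ) (hε : 0 ≤ ε) (hτ : 0 < τ) (hR : 0 < R) :
    0 ≤ ∫ r in Ioi R, r ^ b / (ε + τ * r ^ m) := by
  refine setIntegral_nonneg measurableSet_Ioi (fun r hr => ?_)
  have hr0 : (0:ℝ) < r := hR.trans hr
  positivity

theorem tail_le (b m τ ε R : ℝ) (hb : 0 ≤ b) (hm : b + 1 < m) (hτ : 0 < τ)
    (hε : 0 ≤ ε) (hR : 0 < R) :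
    (∫ r in Ioi R, r ^ b / (ε + τ * r ^ m)) ≤ ∫ r in Ioi R, τ⁻¹ * r ^ (b - m) := by
  refine setIntegral_mono_on (integ_tail b m τ ε R hb hm hτ hε hR)
    ((integrableOn_Ioi_rpow_of_lt (by linarith) hR).const_mul _) measurableSet_Ioi
    (fun r hr => ?_)
  have hr0 : (0:ℝ) < r := hR.trans hr
  have hrm : (0:ℝ) < τ * r ^ m := by positivity
  have h2 : r ^ b / (τ * r ^ m) = τ⁻¹ * r ^ (b - m) := by
    rw [Real.rpow_sub hr0]; field_simp
  rw [← h2]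
  exact div_le_div_of_nonneg_left (Real.rpow_nonneg hr0.le _) hrm (by linarith)

theorem integ_Ioc (b m τ ε R : ℝ) (hb : 0 ≤ b) (hm0 : 0 < m) (hτ : 0 < τ)
    (hε : 0 < ε) (hR : 0 < R) :
    IntegrableOn (fun r : ℝ => r ^ b / (ε + τ * r ^ m)) (Ioc 0 R) := by
  have hcont : ContinuousOn (fun r : ℝ => r ^ b / (ε + τ * r ^ m)) (Icc 0 R) := by
    refine ContinuousOn.div ((cont_rpow b hb).continuousOn)
      (continuousOn_const.add (continuousOn_const.mul ((cont_rpow m hm0.le).continuousOn)))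
      (fun x hx => ?_)
    have : (0:ℝ) ≤ τ * x ^ m := by
      have := Real.rpow_nonneg hx.1 m
      positivity
    positivity
  exact (hcont.integrableOn_compact isCompact_Icc).mono_set Ioc_subset_Icc_self

theorem ftc_log (m τ ε R : ℝ) (hm : 1 ≤ m) (hτ : 0 < τ) (hε : 0 < ε) (hR : 0 < R) :
    ∫ r in Ioo (0:ℝ) R, r ^ (m-1) / (ε + τ * r ^ m)
      = (Real.log (ε + τ * R ^ m) - Real.log ε) / (m * τ) := by
  have hm0 : (0:ℝ) < m := by linarith
  have hpos : ∀ r : ℝ, 0 ≤ r → 0 < ε + τ * r ^ m := fun r hr => by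
    have := Real.rpow_nonneg hr m; positivity
  have hderiv : ∀ r ∈ uIcc (0:ℝ) R, HasDerivAt
      (fun r : ℝ => (m*τ)⁻¹ * Real.log (ε + τ * r ^ m)) (r ^ (m-1) / (ε + τ * r ^ m)) r := by
    intro r hr
    rw [uIcc_of_le hR.le] at hr
    have h1 : HasDerivAt (fun r : ℝ => r ^ m) (m * r ^ (m-1)) r :=
      Real.hasDerivAt_rpow_const (Or.inr hm)
    have h2 : HasDerivAt (fun r : ℝ => ε + τ * r ^ m) (τ * (m * r ^ (m-1))) r :=
      (h1.const_mul τ).const_add ε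
    have h3 := (h2.log (hpos r hr.1).ne').const_mul ((m*τ)⁻¹)
    refine h3.congr_deriv ?_
    field_simp [(hpos r hr.1).ne']
  have hcont : ContinuousOn (fun r : ℝ => r ^ (m-1) / (ε + τ * r ^ m)) (uIcc 0 R) := by
    rw [uIcc_of_le hR.le]
    refine ContinuousOn.div ((cont_rpow _ (by linarith)).continuousOn)
      (continuousOn_const.add (continuousOn_const.mul ((cont_rpow _ hm0.le).continuousOn)))
      (fun x hx => (hpos x hx.1).ne')
  have := intervalIntegral.integral_eq_sub_of_hasDerivAt hderiv (hcont.intervalIntegrable)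
  rw [intervalIntegral.integral_of_le hR.le, integral_Ioc_eq_integral_Ioo] at this
  rw [this, Real.zero_rpow hm0.ne']
  field_simp
  rw [mul_zero, add_zero]

theorem radial (d : ℕ) (hd : 2 ≤ d) (m τ ε R : ℝ) :
    ∫ x : EuclideanSpace ℝ (Fin (d - 1)) in Metric.ball 0 R,
        ‖x‖ ^ 2 / (ε + τ * ‖x‖ ^ m)
      = ((d : ℝ) - 1) * (volume (Metric.ball (0 : EuclideanSpace ℝ (Fin (d - 1))) 1)).toReal
          * ∫ r in Ioo (0:ℝ) R, r ^ ((d:ℝ)) / (ε + τ * r ^ m) := by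
  set E := EuclideanSpace ℝ (Fin (d - 1)) with hE
  have hdim : Module.finrank ℝ E = d - 1 := finrank_euclideanSpace_fin
  haveI : Nontrivial E := Module.nontrivial_of_finrank_pos (R := ℝ) (by rw [hdim]; omega)
  set F : ℝ → ℝ := Set.indicator (Iio R) (fun r => r ^ 2 / (ε + τ * r ^ m)) with hF
  have step1 : ∫ x : E in Metric.ball 0 R, ‖x‖ ^ 2 / (ε + τ * ‖x‖ ^ m) = ∫ x : E, F ‖x‖ := by
    rw [← integral_indicator measurableSet_ball]
    congr 1
    funext x
    by_cases hx : x ∈ Metric.ball (0:E) R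
    · rw [Set.indicator_of_mem hx, hF,
        Set.indicator_of_mem (by simpa [mem_ball_zero_iff] using hx : ‖x‖ ∈ Iio R)]
    · rw [Set.indicator_of_notMem hx, hF,
        Set.indicator_of_notMem (by simpa [mem_ball_zero_iff] using hx : ‖x‖ ∉ Iio R)]
  rw [step1, integral_fun_norm_addHaar volume F, hdim]
  have step2 : ∫ y in Ioi (0:ℝ), y ^ (d - 1 - 1) • F y
      = ∫ r in Ioo (0:ℝ) R, r ^ ((d:ℝ)) / (ε + τ * r ^ m) := by
    have heq : (fun y : ℝ => y ^ (d - 1 - 1) • F y)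
        = fun y => Set.indicator (Iio R)
            (fun r => r ^ (d - 1 - 1) * (r ^ 2 / (ε + τ * r ^ m))) y := by
      funext y
      by_cases hy : y ∈ Iio R
      · rw [hF, Set.indicator_of_mem hy, Set.indicator_of_mem hy, smul_eq_mul]
      · rw [hF, Set.indicator_of_notMem hy, Set.indicator_of_notMem hy, smul_zero]
    rw [heq, setIntegral_indicator measurableSet_Iio, Set.Ioi_inter_Iio]
    refine setIntegral_congr_fun measurableSet_Ioo fun r hr => ?_
    have hpow : r ^ (d - 1 - 1) * r ^ 2 = r ^ ((d:ℝ)) := by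
      rw [← pow_add, show d - 1 - 1 + 2 = d by omega, ← Real.rpow_natCast]
    rw [← hpow]; ring
  rw [step2, nsmul_eq_mul, smul_eq_mul, ← mul_assoc]
  congr 2
  rw [Nat.cast_sub (by omega)]; norm_num


theorem case1 (d : ℕ) (hd : 2 ≤ d) (m τ R : ℝ)
    (hm : (d : ℝ) + 1 < m) (hτ : 0 < τ) (hR : 0 < R) :
    Tendsto (fun ε : ℝ =>
        (∫ x : EuclideanSpace ℝ (Fin (d - 1)) in Metric.ball 0 R,
            ‖x‖ ^ 2 / (ε + τ * ‖x‖ ^ m)) /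
          ((((d : ℝ) - 1) *
              ((volume (Metric.ball (0 : EuclideanSpace ℝ (Fin (d - 1))) 1)).toReal *
                (Real.Gamma (1 - ((d : ℝ) + 1) / m) * Real.Gamma (((d : ℝ) + 1) / m)) /
                (m * τ ^ (((d : ℝ) + 1) / m)))) *
            ε ^ (((d : ℝ) + 1) / m - 1)))
      (nhdsWithin 0 (Set.Ioi 0)) (nhds 1) := by
  have hd2 : (2:ℝ) ≤ (d:ℝ) := by exact_mod_cast hd
  have hm0 : (0:ℝ) < m := by linarith
  set b : ℝ := (d : ℝ) with hb
  have hb0 : (0:ℝ) ≤ b := by positivity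
  have hbm : b + 1 < m := hm
  set p : ℝ := ((d : ℝ) + 1) / m with hp
  have hp' : p = (b+1)/m := rfl
  have hp0 : 0 < p := by rw [hp]; positivity
  have hp1 : p < 1 := by rw [hp, div_lt_one hm0]; linarith
  set V : ℝ := (volume (Metric.ball (0 : EuclideanSpace ℝ (Fin (d - 1))) 1)).toReal with hV
  have hV0 : 0 < V :=
    ENNReal.toReal_pos (Metric.measure_ball_pos volume _ one_pos).ne' measure_ball_lt_top.ne
  set J : ℝ := ∫ u in Ioi (0:ℝ), u ^ b / (1 + u ^ m) with hJdef
  have hJ : J = Real.Gamma p * Real.Gamma (1-p) / m := by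
    rw [hJdef, Jval b m hb0 hbm, hp']
  have hJ0 : 0 < J := by
    rw [hJ]
    exact div_pos (mul_pos (Real.Gamma_pos_of_pos hp0)
      (Real.Gamma_pos_of_pos (by linarith))) hm0
  set c : ℝ := ((d : ℝ) - 1) * (V * (Real.Gamma (1 - p) * Real.Gamma p) / (m * τ ^ p))
    with hcdef
  have hτp : (0:ℝ) < τ ^ p := Real.rpow_pos_of_pos hτ _
  have hc0 : 0 < c := by
    refine mul_pos (by linarith) (div_pos (mul_pos hV0 (mul_pos
      (Real.Gamma_pos_of_pos (by linarith)) (Real.Gamma_pos_of_pos hp0))) (by positivity))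
  have hcc : c = ((d : ℝ) - 1) * V * (τ ^ (-p) * J) := by
    rw [hcdef, hJ, Real.rpow_neg hτ.le]
    field_simp
  set T : ℝ → ℝ := fun ε => ∫ r in Ioi R, r ^ b / (ε + τ * r ^ m) with hT
  set K : ℝ := ∫ r in Ioi R, τ⁻¹ * r ^ (b - m) with hK
  -- eventual equality of the ratio
  have hev : ∀ ε ∈ Ioi (0:ℝ),
      (∫ x : EuclideanSpace ℝ (Fin (d - 1)) in Metric.ball 0 R,
          ‖x‖ ^ 2 / (ε + τ * ‖x‖ ^ m)) / (c * ε ^ (p - 1))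
        = 1 - (((d : ℝ) - 1) * V * T ε) / (c * ε ^ (p - 1)) := by
    intro ε hε
    have hε0 : (0:ℝ) < ε := hε
    have hεp : (0:ℝ) < ε ^ (p-1) := Real.rpow_pos_of_pos hε0 _
    have hD : c * ε ^ (p-1) ≠ 0 := (mul_pos hc0 hεp).ne'
    have hsplit : ∫ r in Ioi (0:ℝ), r ^ b / (ε + τ * r ^ m)
        = (∫ r in Ioc (0:ℝ) R, r ^ b / (ε + τ * r ^ m)) + T ε := by
      rw [hT, ← setIntegral_union (Set.Ioc_disjoint_Ioi le_rfl) measurableSet_Ioi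
        (integ_Ioc b m τ ε R hb0 hm0 hτ hε0 hR)
        (integ_tail b m τ ε R hb0 hbm hτ hε0.le hR),
        Set.Ioc_union_Ioi_eq_Ioi hR.le]
    have hIoo : ∫ r in Ioo (0:ℝ) R, r ^ b / (ε + τ * r ^ m)
        = ε ^ (p-1) * τ ^ (-p) * J - T ε := by
      rw [← integral_Ioc_eq_integral_Ioo, eq_sub_iff_add_eq, ← hsplit,
        scaling b m τ ε hb0 hbm hτ hε0, ← hp', ← hJdef]
    rw [radial d hd m τ ε R, ← hV, hIoo, eq_sub_iff_add_eq, ← add_div,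
      div_eq_one_iff_eq hD, hcc]
    ring
  have hevq : (fun ε : ℝ =>
      (∫ x : EuclideanSpace ℝ (Fin (d - 1)) in Metric.ball 0 R,
          ‖x‖ ^ 2 / (ε + τ * ‖x‖ ^ m)) / (c * ε ^ (p - 1)))
      =ᶠ[nhdsWithin 0 (Set.Ioi 0)]
      (fun ε : ℝ => 1 - (((d : ℝ) - 1) * V * T ε) / (c * ε ^ (p - 1))) :=
    eventually_nhdsWithin_of_forall hev
  refine Tendsto.congr' hevq.symm ?_
  -- limit of 1 - small
  have htop : Tendsto (fun ε : ℝ => ε ^ (p-1)) (nhdsWithin 0 (Set.Ioi 0)) atTop := by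
    have h1 : Tendsto (fun ε : ℝ => (ε⁻¹) ^ (1-p)) (nhdsWithin 0 (Set.Ioi 0)) atTop :=
      (tendsto_rpow_atTop (by linarith)).comp tendsto_inv_nhdsGT_zero
    refine h1.congr' ?_
    filter_upwards [self_mem_nhdsWithin] with ε hε
    rw [Real.inv_rpow (le_of_lt hε), ← Real.rpow_neg (le_of_lt hε), neg_sub]
  have hDtop : Tendsto (fun ε : ℝ => c * ε ^ (p-1)) (nhdsWithin 0 (Set.Ioi 0)) atTop :=
    htop.const_mul_atTop hc0
  have hup : Tendsto (fun ε : ℝ => (((d : ℝ) - 1) * V * K) / (c * ε ^ (p-1)))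
      (nhdsWithin 0 (Set.Ioi 0)) (nhds 0) := tendsto_const_nhds.div_atTop hDtop
  have hz : Tendsto (fun ε : ℝ => (((d : ℝ) - 1) * V * T ε) / (c * ε ^ (p-1)))
      (nhdsWithin 0 (Set.Ioi 0)) (nhds 0) := by
    refine tendsto_of_tendsto_of_tendsto_of_le_of_le' tendsto_const_nhds hup ?_ ?_
    · filter_upwards [self_mem_nhdsWithin] with ε hε
      have hε0 : (0:ℝ) < ε := hε
      have hεp : (0:ℝ) < ε ^ (p-1) := Real.rpow_pos_of_pos hε0 _
      exact div_nonneg (mul_nonneg (mul_nonneg (by linarith) hV0.le)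
        (tail_nonneg b m τ ε R hε0.le hτ hR)) (mul_pos hc0 hεp).le
    · filter_upwards [self_mem_nhdsWithin] with ε hε
      have hε0 : (0:ℝ) < ε := hε
      have hεp : (0:ℝ) < ε ^ (p-1) := Real.rpow_pos_of_pos hε0 _
      rw [div_le_div_iff_of_pos_right (mul_pos hc0 hεp)]
      have hTK := tail_le b m τ ε R hb0 hbm hτ hε0.le hR
      have hd10 : (0:ℝ) ≤ ((d:ℝ)-1) * V := mul_nonneg (by linarith) hV0.le
      exact mul_le_mul_of_nonneg_left hTK hd10
  simpa using tendsto_const_nhds.sub hz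

theorem case2 (d : ℕ) (hd : 2 ≤ d) (m τ R : ℝ)
    (hm2 : m = (d : ℝ) + 1) (hτ : 0 < τ) (hR : 0 < R) :
    Tendsto (fun ε : ℝ =>
        (∫ x : EuclideanSpace ℝ (Fin (d - 1)) in Metric.ball 0 R,
            ‖x‖ ^ 2 / (ε + τ * ‖x‖ ^ m)) /
          ((((d : ℝ) - 1) *
              ((volume (Metric.ball (0 : EuclideanSpace ℝ (Fin (d - 1))) 1)).toReal /
                (m * τ ^ (((d : ℝ) + 1) / m)))) *
            |Real.log ε|))
      (nhdsWithin 0 (Set.Ioi 0)) (nhds 1) := by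
  have hd2 : (2:ℝ) ≤ (d:ℝ) := by exact_mod_cast hd
  have hm0 : (0:ℝ) < m := by rw [hm2]; linarith
  have hm1 : (1:ℝ) ≤ m := by rw [hm2]; linarith
  have hp1 : ((d : ℝ) + 1) / m = 1 := by rw [hm2, div_self (by linarith)]
  set V : ℝ := (volume (Metric.ball (0 : EuclideanSpace ℝ (Fin (d - 1))) 1)).toReal with hV
  have hV0 : 0 < V :=
    ENNReal.toReal_pos (Metric.measure_ball_pos volume _ one_pos).ne' measure_ball_lt_top.ne
  have hRm : (0:ℝ) < τ * R ^ m := by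
    have := Real.rpow_pos_of_pos hR m; positivity
  have hA0 : (0:ℝ) < ((d:ℝ) - 1) * (V / (m * τ)) := by
    refine mul_pos (by linarith) (div_pos hV0 (by positivity))
  -- eventual equality on Ioo 0 1
  have hev : ∀ ε ∈ Set.Ioo (0:ℝ) 1,
      (∫ x : EuclideanSpace ℝ (Fin (d - 1)) in Metric.ball 0 R,
          ‖x‖ ^ 2 / (ε + τ * ‖x‖ ^ m)) /
        ((((d : ℝ) - 1) * (V / (m * τ ^ (((d : ℝ) + 1) / m)))) * |Real.log ε|)
        = 1 + Real.log (ε + τ * R ^ m) / (-Real.log ε) := by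
    intro ε hε
    have hε0 : (0:ℝ) < ε := hε.1
    have hlog : Real.log ε < 0 := Real.log_neg hε0 hε.2
    have hIoo : ∫ r in Ioo (0:ℝ) R, r ^ ((d:ℝ)) / (ε + τ * r ^ m)
        = (Real.log (ε + τ * R ^ m) - Real.log ε) / (m * τ) := by
      rw [show ((d:ℝ)) = m - 1 by rw [hm2]; ring]
      exact ftc_log m τ ε R hm1 hτ hε0 hR
    rw [radial d hd m τ ε R, ← hV, hIoo, hp1, Real.rpow_one, abs_of_neg hlog]
    have h1 : -Real.log ε ≠ 0 := neg_ne_zero.2 hlog.ne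
    rw [show ((d:ℝ)-1) * V * ((Real.log (ε + τ * R ^ m) - Real.log ε) / (m*τ))
        = (((d:ℝ)-1) * (V/(m*τ))) * (Real.log (ε + τ * R ^ m) - Real.log ε) by ring,
      mul_div_mul_left _ _ hA0.ne']
    field_simp [hlog.ne]
    ring
  have hIoo01 : Set.Ioo (0:ℝ) 1 ∈ nhdsWithin (0:ℝ) (Set.Ioi 0) :=
    Ioo_mem_nhdsGT_of_mem (by simp [zero_lt_one])
  refine Tendsto.congr' (Filter.eventuallyEq_of_mem hIoo01 hev).symm ?_
  have h1 : Tendsto (fun ε : ℝ => Real.log (ε + τ * R ^ m))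
      (nhdsWithin 0 (Set.Ioi 0)) (nhds (Real.log (τ * R ^ m))) := by
    have hb : Tendsto (fun ε : ℝ => ε + τ * R ^ m)
        (nhdsWithin 0 (Set.Ioi 0)) (nhds (τ * R ^ m)) := by
      have h := ((continuous_id.add (continuous_const (y := τ * R ^ m))).tendsto (0:ℝ)).mono_left
        (nhdsWithin_le_nhds (s := Set.Ioi (0:ℝ)))
      simpa [Pi.add_def] using h
    exact ((Real.continuousAt_log hRm.ne').tendsto).comp hb
  have h2 : Tendsto (fun ε : ℝ => -Real.log ε) (nhdsWithin 0 (Set.Ioi 0)) atTop := by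
    refine tendsto_neg_atBot_atTop.comp (Real.tendsto_log_nhdsNE_zero.mono_left ?_)
    exact nhdsWithin_mono 0 (fun x hx => ne_of_gt hx)
  have hz : Tendsto (fun ε : ℝ => Real.log (ε + τ * R ^ m) / (-Real.log ε))
      (nhdsWithin 0 (Set.Ioi 0)) (nhds 0) := h1.div_atTop h2
  simpa using tendsto_const_nhds.add hz

end GapAsymptotics


/-- Asymptotics of `∫_{B'_R ⊂ ℝ^{d−1}} |x'|² dx'/(ε + τ|x'|^m)` for `m ≥ d + 1`:
as `ε → 0⁺` the integral equals `(d−1) M₂ ρ₂(ε)(1 + o(1))`, where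
`M₂ = ω_{d−1} Γ[(d+1)/m]/(m τ^{(d+1)/m})` with `Γ[(d+1)/m] = Γ(1−(d+1)/m)Γ((d+1)/m)` and
`ρ₂(ε) = ε^{(d+1)/m − 1}` if `m > d+1`, and `Γ[(d+1)/m] = 1`, `ρ₂(ε) = |ln ε|` if
`m = d+1`. -/
theorem gap_weighted_integral_asymptotics (d : ℕ) (hd : 2 ≤ d) (m τ R : ℝ)
    (hm : (d : ℝ) + 1 ≤ m) (hτ : 0 < τ) (hR : 0 < R) :
    (((d : ℝ) + 1 < m → Tendsto (fun ε : ℝ =>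
        (∫ x : EuclideanSpace ℝ (Fin (d - 1)) in Metric.ball 0 R,
            ‖x‖ ^ 2 / (ε + τ * ‖x‖ ^ m)) /
          ((((d : ℝ) - 1) *
              ((volume (Metric.ball (0 : EuclideanSpace ℝ (Fin (d - 1))) 1)).toReal *
                (Real.Gamma (1 - ((d : ℝ) + 1) / m) * Real.Gamma (((d : ℝ) + 1) / m)) /
                (m * τ ^ (((d : ℝ) + 1) / m)))) *
            ε ^ (((d : ℝ) + 1) / m - 1)))
      (nhdsWithin 0 (Set.Ioi 0)) (nhds 1)) ∧
    (m = (d : ℝ) + 1 → Tendsto (fun ε : ℝ =>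
        (∫ x : EuclideanSpace ℝ (Fin (d - 1)) in Metric.ball 0 R,
            ‖x‖ ^ 2 / (ε + τ * ‖x‖ ^ m)) /
          ((((d : ℝ) - 1) *
              ((volume (Metric.ball (0 : EuclideanSpace ℝ (Fin (d - 1))) 1)).toReal /
                (m * τ ^ (((d : ℝ) + 1) / m)))) *
            |Real.log ε|))
      (nhdsWithin 0 (Set.Ioi 0)) (nhds 1))) := by
  exact ⟨fun hm' => GapAsymptotics.case1 d hd m τ R hm' hτ hR,
    fun hm2 => GapAsymptotics.case2 d hd m τ R hm2 hτ hR⟩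
end

section
/- Let m ≥ 2, τ₀ > 0, r₀ > 0. Then as ε → 0⁺, ∫_{ε^{1/(12m)} < |x| < r₀} dx/(τ₀|x|^m) + ∫_{|x| < ε^{1/(12m)}} dx/(ε + τ₀|x|^m) = (2Γ(1/m)Γ(1−1/m)/(m τ₀^{1/m})) ε^{1/m − 1} − 2 r₀^{1−m}/(τ₀(m−1)) + O(ε^{(10m+1)/(12m)}) (with the first term replaced by (2/τ₀)|ln ε| when m = 1 is excluded; here m ≥ 2). -/
open MeasureTheory Set Real

lemma real_beta {s : ℝ} (h0 : 0 < s) (h1 : s < 1) :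
    ∫ t in Ioo (0:ℝ) 1, t ^ (s-1) * (1-t) ^ (-s) = Real.Gamma s * Real.Gamma (1-s) := by
  have key := Complex.Gamma_mul_Gamma_eq_betaIntegral (s := (s:ℂ)) (t := ((1-s:ℝ):ℂ))
    (by simpa using h0) (by simpa using (by linarith : 0 < 1 - s))
  rw [show (s:ℂ) + ((1-s:ℝ):ℂ) = 1 by push_cast; ring, Complex.Gamma_one, one_mul] at key
  rw [Complex.Gamma_ofReal, Complex.Gamma_ofReal] at key
  unfold Complex.betaIntegral at key
  have h2 : (((∫ x : ℝ in (0:ℝ)..1, x ^ (s-1) * (1-x) ^ (-s) : ℝ)) : ℂ)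
      = (∫ x : ℝ in (0:ℝ)..1, (x:ℂ) ^ ((s:ℂ) - 1) * (1 - (x:ℂ)) ^ (((1-s:ℝ):ℂ) - 1)) := by
    have base : (∫ x : ℝ in (0:ℝ)..1, ((x ^ (s-1) * (1-x) ^ (-s) : ℝ) : ℂ))
        = (((∫ x : ℝ in (0:ℝ)..1, x ^ (s-1) * (1-x) ^ (-s) : ℝ)) : ℂ) := by
      exact_mod_cast RCLike.intervalIntegral_ofReal (𝕜 := ℂ)
        (f := fun x => x ^ (s-1) * (1-x) ^ (-s))
    rw [← base]
    refine intervalIntegral.integral_congr (fun x hx => ?_)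
    rw [uIcc_of_le (by norm_num : (0:ℝ) ≤ 1)] at hx
    rw [Complex.ofReal_mul]
    rw [show ((x ^ (s-1) : ℝ) : ℂ) = (x:ℂ) ^ ((s:ℂ) - 1) by
      rw [Complex.ofReal_cpow hx.1]; push_cast; ring_nf]
    rw [show (((1-x) ^ (-s) : ℝ) : ℂ) = (1 - (x:ℂ)) ^ (((1-s:ℝ):ℂ) - 1) by
      rw [Complex.ofReal_cpow (by linarith [hx.2] : 0 ≤ 1 - x)]; push_cast; ring_nf]
  rw [← h2] at key
  have h3 := congrArg Complex.re key
  simp only [Complex.ofReal_re, ← Complex.ofReal_mul] at h3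
  rw [← integral_Ioc_eq_integral_Ioo, ← intervalIntegral.integral_of_le (by norm_num : (0:ℝ) ≤ 1)]
  exact h3.symm

lemma beta_Ioi {s : ℝ} (h0 : 0 < s) (h1 : s < 1) :
    ∫ x in Ioi (0:ℝ), x ^ (s-1) / (1+x) = Real.Gamma s * Real.Gamma (1-s) := by
  have himg : (fun t => t / (1-t)) '' Ioo (0:ℝ) 1 = Ioi 0 := by
    ext y
    constructor
    · rintro ⟨t, ⟨ht0, ht1⟩, rfl⟩
      exact div_pos ht0 (by linarith)
    · intro hy
      refine ⟨y / (1+y), ⟨div_pos hy (by linarith [mem_Ioi.mp hy]), ?_⟩, ?_⟩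
      · rw [div_lt_one (by linarith [mem_Ioi.mp hy])]; linarith [mem_Ioi.mp hy]
      · have h1y : (0:ℝ) < 1 + y := by linarith [mem_Ioi.mp hy]
        field_simp
        ring
  have hderiv : ∀ t ∈ Ioo (0:ℝ) 1, HasDerivWithinAt (fun t => t / (1-t))
      ((1-t)⁻¹ ^ 2) (Ioo (0:ℝ) 1) t := by
    intro t ht
    have hne : (1:ℝ) - t ≠ 0 := by nlinarith [ht.2]
    have := ((hasDerivAt_id t).div ((hasDerivAt_id t).const_sub 1) hne)
    refine this.hasDerivWithinAt.congr_deriv ?_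
    simp only [id]
    field_simp
    ring
  have hinj : InjOn (fun t => t / (1-t)) (Ioo (0:ℝ) 1) := by
    intro t1 ht1 t2 ht2 h
    have h1 : (1:ℝ) - t1 ≠ 0 := by nlinarith [ht1.2]
    have h2 : (1:ℝ) - t2 ≠ 0 := by nlinarith [ht2.2]
    field_simp at h
    linarith
  have key := integral_image_eq_integral_abs_deriv_smul measurableSet_Ioo hderiv hinj
    (fun x => x ^ (s-1) / (1+x))
  rw [himg] at key
  rw [key, ← real_beta h0 h1]
  refine setIntegral_congr_fun measurableSet_Ioo (fun t ht => ?_)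
  have ht0 : (0:ℝ) < t := ht.1
  have hu : (0:ℝ) < 1 - t := by linarith [ht.2]
  have h1t : 1 + t / (1-t) = (1-t)⁻¹ := by field_simp; ring
  simp only [smul_eq_mul, h1t]
  rw [div_rpow ht0.le hu.le, abs_of_pos (by positivity)]
  rw [div_inv_eq_mul, div_eq_mul_inv, ← Real.rpow_neg hu.le (s-1), inv_pow,
    ← Real.rpow_natCast (1-t) 2, ← Real.rpow_neg hu.le]
  calc (1-t) ^ (-((2:ℕ):ℝ)) * (t ^ (s-1) * (1-t) ^ (-(s-1)) * (1-t))
      = t ^ (s-1) * ((1-t) ^ (-((2:ℕ):ℝ)) * (1-t) ^ (-(s-1)) * (1-t) ^ (1:ℝ)) := by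
        rw [Real.rpow_one]; ring
    _ = t ^ (s-1) * (1-t) ^ (-s) := by
        rw [← Real.rpow_add hu, ← Real.rpow_add hu]; congr 1; push_cast; ring

lemma int_one_add_rpow {m : ℝ} (hm : 2 ≤ m) :
    ∫ x in Ioi (0:ℝ), 1 / (1 + x ^ m) = Real.Gamma (1/m) * Real.Gamma (1 - 1/m) / m := by
  have hm0 : (0:ℝ) < m := by linarith
  have key := integral_comp_rpow_Ioi_of_pos (g := fun y => y ^ (1/m - 1) / (1+y)) hm0
  rw [beta_Ioi (by positivity) (by rw [div_lt_one hm0]; linarith)] at key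
  have congr1 : ∫ x in Ioi (0:ℝ), (m * x ^ (m-1)) • ((x^m) ^ (1/m - 1) / (1 + x^m))
      = ∫ x in Ioi (0:ℝ), m * (1 / (1 + x ^ m)) := by
    refine setIntegral_congr_fun measurableSet_Ioi (fun x hx => ?_)
    have hx0 : (0:ℝ) < x := hx
    have e1 : (x^m) ^ (1/m - 1) = x ^ (1 - m) := by
      rw [← Real.rpow_mul hx0.le]
      congr 1
      field_simp
    rw [e1, smul_eq_mul]
    rw [show x ^ (1-m) / (1 + x^m) = x ^ (1-m) * (1/(1 + x^m)) by ring]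
    rw [← mul_assoc, mul_assoc m, ← Real.rpow_add hx0]
    norm_num
  rw [congr1, integral_const_mul] at key
  field_simp at key ⊢
  linarith [key]

lemma int_eps_line {m τ₀ ε : ℝ} (hm : 2 ≤ m) (hτ : 0 < τ₀) (hε : 0 < ε) :
    ∫ x in Ioi (0:ℝ), 1 / (ε + τ₀ * x ^ m)
      = ε ^ (1/m - 1) * τ₀ ^ (-(1/m)) * (Real.Gamma (1/m) * Real.Gamma (1 - 1/m) / m) := by
  have hm0 : (0:ℝ) < m := by linarith
  set c : ℝ := (ε/τ₀) ^ (1/m) with hc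
  have hc0 : 0 < c := by positivity
  have key := integral_comp_mul_left_Ioi (fun y => 1 / (ε + τ₀ * y ^ m)) 0 hc0
  rw [mul_zero] at key
  have hcm : c ^ m = ε / τ₀ := by
    rw [hc, ← Real.rpow_mul (by positivity), one_div, inv_mul_cancel₀ hm0.ne', Real.rpow_one]
  have congr1 : ∫ x in Ioi (0:ℝ), (fun y => 1 / (ε + τ₀ * y ^ m)) (c*x)
      = ∫ x in Ioi (0:ℝ), ε⁻¹ * (1 / (1 + x ^ m)) := by
    refine setIntegral_congr_fun measurableSet_Ioi (fun x hx => ?_)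
    have hx0 : (0:ℝ) < x := hx
    simp only
    rw [Real.mul_rpow hc0.le hx0.le, hcm]
    rw [show ε + τ₀ * (ε / τ₀ * x ^ m) = ε * (1 + x ^ m) by field_simp]
    rw [one_div, mul_inv, ← one_div]
    rw [one_div ε]
    ring
  rw [congr1, integral_const_mul, int_one_add_rpow hm, smul_eq_mul] at key
  have h2 : (∫ x in Ioi (0:ℝ), 1 / (ε + τ₀ * x ^ m))
      = c * (ε⁻¹ * (Real.Gamma (1/m) * Real.Gamma (1 - 1/m) / m)) := by
    rw [key, mul_inv_cancel_left₀ hc0.ne']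
  rw [h2, hc, Real.div_rpow hε.le hτ.le, Real.rpow_neg hτ.le,
    Real.rpow_sub hε, Real.rpow_one]
  ring

lemma meas_aux (c d p : ℝ) : Measurable fun y : ℝ => 1 / (c + d * y ^ p) := by fun_prop

lemma even_set_int (f : ℝ → ℝ) (T : Set ℝ) (hT : MeasurableSet T) (hT0 : T ⊆ Ici 0) :
    ∫ x in {x : ℝ | |x| ∈ T}, f |x| = 2 * ∫ y in T, f y := by
  have hS : MeasurableSet {x : ℝ | |x| ∈ T} := _root_.continuous_abs.measurable hT
  rw [← integral_indicator hS]
  have heq : (fun x => indicator {x : ℝ | |x| ∈ T} (fun x => f |x|) x)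
      = fun x => (indicator T f) |x| := by
    funext x
    by_cases h : |x| ∈ T <;> simp [indicator, h]
  rw [heq, integral_comp_abs (f := indicator T f)]
  congr 1
  have hae : (Ioi (0:ℝ) ∩ T : Set ℝ) =ᵐ[volume] T := by
    have h0 : ∀ᵐ x : ℝ, x ≠ 0 := by
      rw [ae_iff]
      simp [show {x : ℝ | ¬ x ≠ 0} = {0} by ext x; simp]
    filter_upwards [h0] with x hx
    simp only [eq_iff_iff, mem_inter_iff, mem_Ioi]
    exact ⟨fun h => h.2, fun h => ⟨lt_of_le_of_ne (hT0 h) (Ne.symm hx), h⟩⟩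
  calc ∫ y in Ioi 0, indicator T f y = ∫ y in Ioi 0 ∩ T, f y := by
        rw [setIntegral_indicator hT]
    _ = ∫ y in T, f y := setIntegral_congr_set hae

lemma int_Ioo_rpow {a b r : ℝ} (ha : 0 < a) (hab : a ≤ b) (hr : r ≠ -1) :
    ∫ y in Ioo a b, y ^ r = (b ^ (r+1) - a ^ (r+1)) / (r+1) := by
  rw [← integral_Ioc_eq_integral_Ioo, ← intervalIntegral.integral_of_le hab]
  refine integral_rpow (Or.inr ⟨hr, ?_⟩)
  rw [uIcc_of_le hab, mem_Icc]
  push_neg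
  intro h
  linarith

lemma integrable_f_Ioi {m τ₀ ε : ℝ} (hm : 2 ≤ m) (hτ : 0 < τ₀) (hε : 0 < ε) :
    IntegrableOn (fun y : ℝ => 1 / (ε + τ₀ * y ^ m)) (Ioi 0) := by
  have hmeas := meas_aux ε τ₀ m
  have h1 : IntegrableOn (fun y : ℝ => 1 / (ε + τ₀ * y ^ m)) (Ioc 0 1) := by
    apply Measure.integrableOn_of_bounded (M := 1/ε)
    · simp
    · exact hmeas.aestronglyMeasurable
    · rw [ae_restrict_iff' measurableSet_Ioc]
      filter_upwards with y hy
      have h0 : 0 ≤ τ₀ * y ^ m := mul_nonneg hτ.le (Real.rpow_nonneg hy.1.le m)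
      rw [Real.norm_eq_abs, abs_of_nonneg (by positivity)]
      exact one_div_le_one_div_of_le hε (le_add_of_nonneg_right h0)
  have h2 : IntegrableOn (fun y : ℝ => 1 / (ε + τ₀ * y ^ m)) (Ioi 1) := by
    refine Integrable.mono' ((integrableOn_Ioi_rpow_of_lt (by linarith : -m < -1)
      one_pos).const_mul (1/τ₀)) hmeas.aestronglyMeasurable ?_
    rw [ae_restrict_iff' measurableSet_Ioi]
    filter_upwards with y hy
    have hy0 : (0:ℝ) < y := lt_trans one_pos hy
    have hym : 0 < y ^ m := Real.rpow_pos_of_pos hy0 m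
    rw [Real.norm_eq_abs, abs_of_nonneg (by positivity), Real.rpow_neg hy0.le]
    rw [one_div, one_div, ← mul_inv]
    exact inv_anti₀ (by positivity) (le_add_of_nonneg_left hε.le)
  have := h1.union h2
  rwa [Ioc_union_Ioi_eq_Ioi (by norm_num : (0:ℝ) ≤ 1)] at this

/-- For `m ≥ 2`, `τ₀, r₀ > 0`, as `ε → 0⁺`,
`∫_{ε^{1/(12m)}<|x|<r₀} dx/(τ₀|x|^m) + ∫_{|x|<ε^{1/(12m)}} dx/(ε + τ₀|x|^m)
 = (2Γ(1/m)Γ(1−1/m)/(m τ₀^{1/m})) ε^{1/m−1} − 2 r₀^{1−m}/(τ₀(m−1)) + O(ε^{(10m+1)/(12m)})`. -/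
theorem split_integral_asymptotics (m τ₀ r₀ : ℝ) (hm : 2 ≤ m) (hτ : 0 < τ₀)
    (hr : 0 < r₀) :
    ∃ C > 0, ∃ ε₀ > 0, ∀ ε ∈ Set.Ioo (0 : ℝ) ε₀,
      abs ((∫ x in {x : ℝ | ε ^ (1 / (12 * m)) < |x| ∧ |x| < r₀}, 1 / (τ₀ * |x| ^ m))
          + (∫ x in {x : ℝ | |x| < ε ^ (1 / (12 * m))}, 1 / (ε + τ₀ * |x| ^ m))
          - ((2 * Real.Gamma (1 / m) * Real.Gamma (1 - 1 / m) / (m * τ₀ ^ (1 / m)))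
              * ε ^ (1 / m - 1)
            - 2 * r₀ ^ (1 - m) / (τ₀ * (m - 1))))
        ≤ C * ε ^ ((10 * m + 1) / (12 * m)) := by
  have hm0 : (0:ℝ) < m := by linarith
  have hm1 : (1:ℝ) < m := by linarith
  refine ⟨2/(τ₀^2*(2*m-1)), div_pos two_pos (mul_pos (pow_pos hτ 2) (by linarith)),
    min 1 (r₀ ^ (12*m)), by positivity, ?_⟩
  rintro ε ⟨hε, hεlt⟩
  have hε1 : ε < 1 := lt_of_lt_of_le hεlt (min_le_left _ _)
  have hεr : ε < r₀ ^ (12*m) := lt_of_lt_of_le hεlt (min_le_right _ _)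
  set a : ℝ := ε ^ (1/(12*m)) with haa
  have hp0 : 0 < 1/(12*m) := by positivity
  have ha0 : 0 < a := Real.rpow_pos_of_pos hε _
  have har : a < r₀ := by
    have h1 : a < (r₀ ^ (12*m)) ^ (1/(12*m)) := Real.rpow_lt_rpow hε.le hεr hp0
    have h2 : (r₀ ^ (12*m)) ^ (1/(12*m)) = r₀ := by
      rw [← Real.rpow_mul hr.le, show (12*m)*(1/(12*m)) = 1 by field_simp, Real.rpow_one]
    linarith [h2 ▸ h1]
  -- reduction to one-sided integrals
  have hset1 : {x : ℝ | a < |x| ∧ |x| < r₀} = {x : ℝ | |x| ∈ Ioo a r₀} := rfl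
  have hset2 : {x : ℝ | |x| < a} = {x : ℝ | |x| ∈ Ico 0 a} := by
    ext x; simp [abs_nonneg]
  have even1 : ∫ x in {x : ℝ | |x| ∈ Ioo a r₀}, 1/(τ₀*|x|^m)
      = 2 * ∫ y in Ioo a r₀, 1/(τ₀*y^m) :=
    even_set_int (fun y => 1/(τ₀*y^m)) _ measurableSet_Ioo
      (fun y hy => le_of_lt (lt_trans ha0 hy.1))
  have even2 : ∫ x in {x : ℝ | |x| ∈ Ico 0 a}, 1/(ε+τ₀*|x|^m)
      = 2 * ∫ y in Ico 0 a, 1/(ε+τ₀*y^m) :=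
    even_set_int (fun y => 1/(ε+τ₀*y^m)) _ measurableSet_Ico (fun y hy => hy.1)
  -- exact values
  have T1 : ∫ y in Ioo a r₀, 1/(τ₀*y^m) = (1/τ₀) * ((r₀^(1-m) - a^(1-m))/(1-m)) := by
    have hcg : ∀ y ∈ Ioo a r₀, 1/(τ₀*y^m) = (1/τ₀) * y^(-m) := by
      intro y hy
      have hy0 : 0 < y := lt_trans ha0 hy.1
      rw [Real.rpow_neg hy0.le]
      have : y ^ m ≠ 0 := (Real.rpow_pos_of_pos hy0 m).ne'
      field_simp
    rw [setIntegral_congr_fun measurableSet_Ioo hcg, integral_const_mul,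
      int_Ioo_rpow ha0 har.le (show -m ≠ -1 by intro h; have := neg_injective h; linarith),
      show -m + 1 = 1 - m by ring]
  have hIf0 : IntegrableOn (fun y : ℝ => 1/(ε+τ₀*y^m)) (Ioi 0) := integrable_f_Ioi hm hτ hε
  have hIfa : IntegrableOn (fun y : ℝ => 1/(ε+τ₀*y^m)) (Ioi a) :=
    hIf0.mono_set (Ioi_subset_Ioi ha0.le)
  have hIga : IntegrableOn (fun y : ℝ => 1/(τ₀*y^m)) (Ioi a) := by
    refine IntegrableOn.congr_fun ((integrableOn_Ioi_rpow_of_lt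
      (show -m < -1 by linarith) ha0).const_mul (1/τ₀)) ?_ measurableSet_Ioi
    intro y hy
    have hy0 : 0 < y := lt_trans ha0 hy
    have hym : y ^ m ≠ 0 := (Real.rpow_pos_of_pos hy0 m).ne'
    show 1/τ₀ * y ^ (-m) = 1/(τ₀*y^m)
    rw [Real.rpow_neg hy0.le]
    field_simp
  have hsplit : ∫ y in Ioo (0:ℝ) a, 1/(ε+τ₀*y^m)
      = (∫ y in Ioi (0:ℝ), 1/(ε+τ₀*y^m)) - ∫ y in Ioi a, 1/(ε+τ₀*y^m) := by
    have e : Ioo (0:ℝ) a = Ioi 0 \ Ici a := by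
      ext x; simp [not_le]
    rw [e, integral_diff measurableSet_Ici hIf0 (fun x hx => lt_of_lt_of_le ha0 hx),
      integral_Ici_eq_integral_Ioi]
  have hga : ∫ y in Ioi a, 1/(τ₀*y^m) = (1/τ₀) * (a^(1-m)/(m-1)) := by
    have hcg : ∀ y ∈ Ioi a, 1/(τ₀*y^m) = (1/τ₀) * y^(-m) := by
      intro y hy
      have hy0 : 0 < y := lt_trans ha0 hy
      have : y ^ m ≠ 0 := (Real.rpow_pos_of_pos hy0 m).ne'
      rw [Real.rpow_neg hy0.le]
      field_simp
    rw [setIntegral_congr_fun measurableSet_Ioi hcg, integral_const_mul,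
      integral_Ioi_rpow_of_lt (by linarith : -m < -1) ha0,
      show -m + 1 = 1 - m by ring]
    congr 1
    rw [div_eq_div_iff (show (1:ℝ)-m ≠ 0 by intro h; linarith)
      (show m-1 ≠ 0 by intro h; linarith)]
    ring
  have hEpos : 0 ≤ ∫ y in Ioi a, (1/(τ₀*y^m) - 1/(ε+τ₀*y^m)) := by
    refine setIntegral_nonneg measurableSet_Ioi (fun y hy => ?_)
    have hy0 : 0 < y := lt_trans ha0 hy
    have hym : 0 < τ₀ * y ^ m := by positivity
    have := one_div_le_one_div_of_le hym (le_add_of_nonneg_left hε.le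
      : τ₀ * y ^ m ≤ ε + τ₀ * y ^ m)
    linarith
  have hEbound : ∫ y in Ioi a, (1/(τ₀*y^m) - 1/(ε+τ₀*y^m))
      ≤ (ε/τ₀^2) * (a^(1-2*m)/(2*m-1)) := by
    have hb : ∀ y ∈ Ioi a, 1/(τ₀*y^m) - 1/(ε+τ₀*y^m) ≤ (ε/τ₀^2) * y^(-(2*m)) := by
      intro y hy
      have hy0 : 0 < y := lt_trans ha0 hy
      have hym : 0 < y ^ m := Real.rpow_pos_of_pos hy0 m
      have hA : 0 < τ₀ * y ^ m := by positivity
      have hB : 0 < ε + τ₀ * y ^ m := by positivity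
      have e1 : 1/(τ₀*y^m) - 1/(ε+τ₀*y^m) = ε / ((τ₀*y^m) * (ε+τ₀*y^m)) := by
        rw [div_sub_div _ _ hA.ne' hB.ne']
        congr 1
        ring
      have e2 : (ε/τ₀^2) * y^(-(2*m)) = ε / ((τ₀*y^m) * (τ₀*y^m)) := by
        rw [Real.rpow_neg hy0.le, show (2:ℝ)*m = m + m by ring, Real.rpow_add hy0]
        ring
      rw [e1, e2]
      exact div_le_div_of_nonneg_left hε.le (by positivity)
        (by nlinarith [mul_le_mul_of_nonneg_left (le_add_of_nonneg_left hε.le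
          : τ₀ * y ^ m ≤ ε + τ₀ * y ^ m) hA.le])
    have hInt2 : IntegrableOn (fun y : ℝ => (ε/τ₀^2) * y^(-(2*m))) (Ioi a) :=
      (integrableOn_Ioi_rpow_of_lt (by linarith : -(2*m) < -1) ha0).const_mul _
    have := setIntegral_mono_on (hIga.sub hIfa) hInt2 measurableSet_Ioi hb
    refine le_trans this (le_of_eq ?_)
    rw [integral_const_mul, integral_Ioi_rpow_of_lt (by linarith : -(2*m) < -1) ha0,
      show -(2*m) + 1 = 1 - 2*m by ring]
    congr 1
    rw [div_eq_div_iff (show (1:ℝ)-2*m ≠ 0 by intro h; linarith)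
      (show 2*m-1 ≠ 0 by intro h; linarith)]
    ring
  have hEeq : ∫ y in Ioi a, (1/(τ₀*y^m) - 1/(ε+τ₀*y^m))
      = (∫ y in Ioi a, 1/(τ₀*y^m)) - ∫ y in Ioi a, 1/(ε+τ₀*y^m) :=
    integral_sub hIga hIfa
  -- main identity
  have hline := int_eps_line hm hτ hε
  have hT : (0:ℝ) < τ₀ ^ (1/m) := Real.rpow_pos_of_pos hτ _
  have main_eq : (∫ x in {x : ℝ | a < |x| ∧ |x| < r₀}, 1 / (τ₀ * |x| ^ m))
          + (∫ x in {x : ℝ | |x| < a}, 1 / (ε + τ₀ * |x| ^ m))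
          - ((2 * Real.Gamma (1/m) * Real.Gamma (1 - 1/m) / (m * τ₀ ^ (1/m)))
              * ε ^ (1/m - 1)
            - 2 * r₀ ^ (1-m) / (τ₀ * (m - 1)))
      = 2 * ∫ y in Ioi a, (1/(τ₀*y^m) - 1/(ε+τ₀*y^m)) := by
    rw [hset1, hset2, even1, even2, integral_Ico_eq_integral_Ioo, hsplit, hline,
      T1, hEeq, hga, Real.rpow_neg hτ.le]
    have h1m : (1:ℝ) - m ≠ 0 := by intro h; linarith [h]
    have hm1' : m - 1 ≠ 0 := by intro h; linarith [h]
    field_simp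
    ring
  rw [main_eq, abs_of_nonneg (by linarith : (0:ℝ) ≤ 2 * ∫ y in Ioi a,
    (1/(τ₀*y^m) - 1/(ε+τ₀*y^m)))]
  have hfinal : 2 * ((ε/τ₀^2) * (a^(1-2*m)/(2*m-1)))
      = 2/(τ₀^2*(2*m-1)) * ε ^ ((10*m+1)/(12*m)) := by
    have e1 : ε * a^(1-2*m) = ε ^ ((10*m+1)/(12*m)) := by
      rw [haa, ← Real.rpow_mul hε.le]
      nth_rewrite 1 [← Real.rpow_one ε]
      rw [← Real.rpow_add hε]
      congr 1
      field_simp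
      linarith
    rw [← e1]
    have h2m1 : (2:ℝ)*m - 1 ≠ 0 := by intro h; linarith [h]
    field_simp
  linarith [hfinal]
end

section
/- Let m ≥ 2, σ > 0, τ > 0, β = σ, and d ≥ 2 with m > d−1. Then ∫₀^R s^{d+σ−2}/(ε + τ s^m) ds divided by ∫₀^R s^{d−2}/(ε + τ s^m) ds is O(ε̂) as ε → 0⁺, where ε̂ = ε^{σ/m} if m > d−1+σ, ε̂ = ε^{σ/m}|ln ε| if m = d−1+σ, and ε̂ = ε^{1−(d−1)/m} if d−1 < m < d−1+σ. -/
open MeasureTheory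

lemma aux_integrable {ε τ m : ℝ} (hε : 0 < ε) (hτ : 0 < τ) (hm : 0 < m)
    {p : ℝ} (hp : 0 ≤ p) {R : ℝ} (hR : 0 < R) :
    IntegrableOn (fun s : ℝ => s ^ p / (ε + τ * s ^ m)) (Set.Ioo 0 R) := by
  have hcont : ContinuousOn (fun s : ℝ => s ^ p / (ε + τ * s ^ m)) (Set.Ioo 0 R) := by
    intro s hs
    have hs0 : s ≠ 0 := ne_of_gt hs.1
    have h1 : ContinuousAt (fun s : ℝ => s ^ p) s :=
      Real.continuousAt_rpow_const s p (Or.inl hs0)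
    have h2 : ContinuousAt (fun s : ℝ => s ^ m) s :=
      Real.continuousAt_rpow_const s m (Or.inl hs0)
    have hden : ε + τ * s ^ m ≠ 0 := by
      have : 0 ≤ s ^ m := Real.rpow_nonneg hs.1.le m
      positivity
    exact ((h1.div ((continuousAt_const.add (continuousAt_const.mul h2)))
      hden)).continuousWithinAt
  refine Integrable.mono' (g := fun _ => R ^ p / ε) ?_ 
    (hcont.aestronglyMeasurable measurableSet_Ioo) ?_
  · exact integrableOn_const measure_Ioo_lt_top.ne enorm_ne_top
  · filter_upwards [ae_restrict_mem measurableSet_Ioo] with s hs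
    have h1 : 0 ≤ s ^ p := Real.rpow_nonneg hs.1.le p
    have h2 : 0 ≤ τ * s ^ m := by
      have := Real.rpow_nonneg hs.1.le m; positivity
    have h3 : s ^ p ≤ R ^ p := Real.rpow_le_rpow hs.1.le hs.2.le hp
    rw [Real.norm_eq_abs, abs_of_nonneg (by positivity)]
    exact div_le_div₀ (by positivity) h3 hε (by linarith)

lemma aux_int_rpow_Ioo {a : ℝ} (ha : 0 < a) {r : ℝ} (hr : -1 < r) :
    ∫ s in Set.Ioo (0:ℝ) a, s ^ r = a ^ (r + 1) / (r + 1) := by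
  rw [← integral_Ioc_eq_integral_Ioo, ← intervalIntegral.integral_of_le ha.le,
    integral_rpow (Or.inl hr), Real.zero_rpow (by linarith), sub_zero]

lemma aux_den_lower {ε τ m R p : ℝ} (hε : 0 < ε) (hτ : 0 < τ) (hm : 0 < m)
    (hp : 0 ≤ p) (hR : 0 < R) (hεR : ε ≤ R ^ m) :
    (1 / ((p + 1) * (1 + τ))) * ε ^ ((p + 1) / m - 1)
      ≤ ∫ s in Set.Ioo (0:ℝ) R, s ^ p / (ε + τ * s ^ m) := by
  set δ : ℝ := ε ^ (1/m) with hδdef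
  have hδ0 : 0 < δ := Real.rpow_pos_of_pos hε _
  have hm' : m ≠ 0 := ne_of_gt hm
  have hδR : δ ≤ R := by
    have h1 : ε ^ (1/m) ≤ (R ^ m) ^ (1/m) :=
      Real.rpow_le_rpow hε.le hεR (by positivity)
    have h2 : (R ^ m) ^ (1/m) = R := by
      rw [← Real.rpow_mul hR.le, mul_one_div, div_self hm', Real.rpow_one]
    rwa [h2] at h1
  have hδm : δ ^ m = ε := by
    rw [hδdef, ← Real.rpow_mul hε.le, one_div, inv_mul_cancel₀ hm', Real.rpow_one]
  have hfi : IntegrableOn (fun s : ℝ => s ^ p / (ε + τ * s ^ m)) (Set.Ioo 0 R) :=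
    aux_integrable hε hτ hm hp hR
  have hnonneg : 0 ≤ᵐ[volume.restrict (Set.Ioo (0:ℝ) R)]
      (fun s : ℝ => s ^ p / (ε + τ * s ^ m)) := by
    filter_upwards [ae_restrict_mem measurableSet_Ioo] with s hs
    have h1 : 0 ≤ s ^ p := Real.rpow_nonneg hs.1.le p
    have h2 : 0 ≤ s ^ m := Real.rpow_nonneg hs.1.le m
    positivity
  have hsub : Set.Ioo (0:ℝ) δ ⊆ Set.Ioo (0:ℝ) R := Set.Ioo_subset_Ioo_right hδR
  have step1 : ∫ s in Set.Ioo (0:ℝ) δ, s ^ p / ((1 + τ) * ε)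
      ≤ ∫ s in Set.Ioo (0:ℝ) δ, s ^ p / (ε + τ * s ^ m) := by
    refine setIntegral_mono_on ?_ (hfi.mono_set hsub) measurableSet_Ioo ?_
    · refine Integrable.div_const ?_ _
      exact ((intervalIntegrable_iff_integrableOn_Ioc_of_le
        hδ0.le).1 (intervalIntegral.intervalIntegrable_rpow' (by linarith))).mono_set
        Set.Ioo_subset_Ioc_self
    · intro s hs
      have hs0 : 0 < s := hs.1
      have h1 : 0 ≤ s ^ p := Real.rpow_nonneg hs0.le p
      have h2 : 0 ≤ s ^ m := Real.rpow_nonneg hs0.le m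
      have h3 : s ^ m ≤ ε := by
        rw [← hδm]; exact Real.rpow_le_rpow hs0.le hs.2.le hm.le
      refine div_le_div₀ h1 le_rfl (by positivity) (by nlinarith)
  have step2 : ∫ s in Set.Ioo (0:ℝ) δ, s ^ p / ((1 + τ) * ε)
      = (1 / ((p + 1) * (1 + τ))) * ε ^ ((p + 1) / m - 1) := by
    rw [integral_div, aux_int_rpow_Ioo hδ0 (by linarith)]
    have hδp : δ ^ (p + 1) = ε ^ ((p + 1) / m) := by
      rw [hδdef, ← Real.rpow_mul hε.le, one_div, inv_mul_eq_div]
    rw [hδp, Real.rpow_sub hε, Real.rpow_one]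
    have h1 : ε ≠ 0 := ne_of_gt hε
    have h2 : (1:ℝ) + τ ≠ 0 := by positivity
    have h3 : p + 1 ≠ 0 := by positivity
    field_simp
  calc (1 / ((p + 1) * (1 + τ))) * ε ^ ((p + 1) / m - 1)
      = ∫ s in Set.Ioo (0:ℝ) δ, s ^ p / ((1 + τ) * ε) := step2.symm
    _ ≤ ∫ s in Set.Ioo (0:ℝ) δ, s ^ p / (ε + τ * s ^ m) := step1
    _ ≤ ∫ s in Set.Ioo (0:ℝ) R, s ^ p / (ε + τ * s ^ m) :=
        setIntegral_mono_set hfi hnonneg (HasSubset.Subset.eventuallyLE hsub)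

lemma aux_num_upper {ε τ m R q : ℝ} (hε : 0 < ε) (hτ : 0 < τ) (hm : 0 < m)
    (hq : 0 ≤ q) (hR : 0 < R) (hεR : ε ≤ R ^ m) :
    ∫ s in Set.Ioo (0:ℝ) R, s ^ q / (ε + τ * s ^ m)
      ≤ ε ^ ((q + 1) / m - 1) / (q + 1)
        + (1/τ) * ∫ s in (ε ^ (1/m) : ℝ)..R, s ^ (q - m) := by
  set δ : ℝ := ε ^ (1/m) with hδdef
  have hδ0 : 0 < δ := Real.rpow_pos_of_pos hε _
  have hm' : m ≠ 0 := ne_of_gt hm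
  have hδR : δ ≤ R := by
    have h1 : ε ^ (1/m) ≤ (R ^ m) ^ (1/m) :=
      Real.rpow_le_rpow hε.le hεR (by positivity)
    have h2 : (R ^ m) ^ (1/m) = R := by
      rw [← Real.rpow_mul hR.le, mul_one_div, div_self hm', Real.rpow_one]
    rwa [h2] at h1
  have hfiIoc : IntegrableOn (fun s : ℝ => s ^ q / (ε + τ * s ^ m)) (Set.Ioc 0 R) := by
    refine (aux_integrable hε hτ hm hq (show (0:ℝ) < R + 1 by linarith)).mono_set ?_
    exact Set.Ioc_subset_Ioo_right (lt_add_one R)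
  have hi1 : IntervalIntegrable (fun s : ℝ => s ^ q / (ε + τ * s ^ m)) volume 0 δ := by
    rw [intervalIntegrable_iff_integrableOn_Ioc_of_le hδ0.le]
    exact hfiIoc.mono_set (Set.Ioc_subset_Ioc_right hδR)
  have hi2 : IntervalIntegrable (fun s : ℝ => s ^ q / (ε + τ * s ^ m)) volume δ R := by
    rw [intervalIntegrable_iff_integrableOn_Ioc_of_le hδR]
    exact hfiIoc.mono_set (Set.Ioc_subset_Ioc_left hδ0.le)
  have hsplit : ∫ s in Set.Ioo (0:ℝ) R, s ^ q / (ε + τ * s ^ m)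
      = (∫ s in (0:ℝ)..δ, s ^ q / (ε + τ * s ^ m))
        + ∫ s in δ..R, s ^ q / (ε + τ * s ^ m) := by
    rw [← integral_Ioc_eq_integral_Ioo, ← intervalIntegral.integral_of_le hR.le,
      intervalIntegral.integral_add_adjacent_intervals hi1 hi2]
  have hzuIcc : (0:ℝ) ∉ Set.uIcc δ R := Set.notMem_uIcc_of_lt hδ0 hR
  have piece1 : (∫ s in (0:ℝ)..δ, s ^ q / (ε + τ * s ^ m))
      ≤ ε ^ ((q + 1) / m - 1) / (q + 1) := by
    have hb : IntervalIntegrable (fun s : ℝ => s ^ q / ε) volume 0 δ :=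
      (intervalIntegral.intervalIntegrable_rpow' (by linarith)).div_const ε
    have h1 : (∫ s in (0:ℝ)..δ, s ^ q / (ε + τ * s ^ m))
        ≤ ∫ s in (0:ℝ)..δ, s ^ q / ε := by
      refine intervalIntegral.integral_mono_on hδ0.le hi1 hb ?_
      intro s hs
      have h1 : 0 ≤ s ^ q := Real.rpow_nonneg hs.1 q
      have h2 : 0 ≤ s ^ m := Real.rpow_nonneg hs.1 m
      exact div_le_div₀ h1 le_rfl hε (by nlinarith)
    have h2 : (∫ s in (0:ℝ)..δ, s ^ q / ε) = ε ^ ((q + 1) / m - 1) / (q + 1) := by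
      rw [intervalIntegral.integral_div, integral_rpow (Or.inl (by linarith : (-1:ℝ) < q)),
        Real.zero_rpow (by linarith), sub_zero]
      have hδp : δ ^ (q + 1) = ε ^ ((q + 1) / m) := by
        rw [hδdef, ← Real.rpow_mul hε.le, one_div, inv_mul_eq_div]
      rw [hδp, Real.rpow_sub hε, Real.rpow_one]
      ring
    linarith
  have piece2 : (∫ s in δ..R, s ^ q / (ε + τ * s ^ m))
      ≤ (1/τ) * ∫ s in δ..R, s ^ (q - m) := by
    have hb : IntervalIntegrable (fun s : ℝ => s ^ (q - m) / τ) volume δ R :=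
      (intervalIntegral.intervalIntegrable_rpow (Or.inr hzuIcc)).div_const τ
    have h1 : (∫ s in δ..R, s ^ q / (ε + τ * s ^ m))
        ≤ ∫ s in δ..R, s ^ (q - m) / τ := by
      refine intervalIntegral.integral_mono_on hδR hi2 hb ?_
      intro s hs
      have hs0 : 0 < s := lt_of_lt_of_le hδ0 hs.1
      have h1 : 0 ≤ s ^ q := Real.rpow_nonneg hs0.le q
      have h2 : 0 < s ^ m := Real.rpow_pos_of_pos hs0 m
      have h3 : s ^ (q - m) = s ^ q / s ^ m := Real.rpow_sub hs0 q m
      rw [h3, div_div]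
      exact div_le_div₀ h1 le_rfl (by positivity) (by nlinarith)
    have h2 : (∫ s in δ..R, s ^ (q - m) / τ) = (1/τ) * ∫ s in δ..R, s ^ (q - m) := by
      rw [intervalIntegral.integral_div]; ring
    linarith
  rw [hsplit]; exact add_le_add piece1 piece2

lemma aux_ratio_le {N D cD B : ℝ} (hcD : 0 < cD) (hD : cD ≤ D) (hN0 : 0 ≤ N)
    (hNB : N ≤ B * cD) : |N / D| ≤ B := by
  have hD0 : 0 < D := lt_of_lt_of_le hcD hD
  have hB : 0 ≤ B := by nlinarith
  rw [abs_of_nonneg (div_nonneg hN0 hD0.le), div_le_iff₀ hD0]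
  nlinarith

lemma aux_N_nonneg {ε τ m R q : ℝ} (hε : 0 < ε) (hτ : 0 < τ) :
    0 ≤ ∫ s in Set.Ioo (0:ℝ) R, s ^ q / (ε + τ * s ^ m) := by
  refine setIntegral_nonneg measurableSet_Ioo ?_
  intro s hs
  have h1 : 0 ≤ s ^ q := Real.rpow_nonneg hs.1.le q
  have h2 : 0 ≤ s ^ m := Real.rpow_nonneg hs.1.le m
  positivity

/-- Relative size of the perturbation term: for `m > d − 1`, the ratio
`(∫₀^R s^{d+σ−2}/(ε+τs^m) ds) / (∫₀^R s^{d−2}/(ε+τs^m) ds)` is `O(ε̂)` as `ε → 0⁺`,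
where `ε̂ = ε^{σ/m}` if `m > d−1+σ`, `ε̂ = ε^{σ/m}|ln ε|` if `m = d−1+σ`, and
`ε̂ = ε^{1−(d−1)/m}` if `d−1 < m < d−1+σ`. -/
theorem perturbation_ratio_bound (d : ℕ) (hd : 2 ≤ d) (m σ τ R : ℝ)
    (hm : 2 ≤ m) (hσ : 0 < σ) (hτ : 0 < τ) (hR : 0 < R)
    (hmd : (d : ℝ) - 1 < m) :
    (((d : ℝ) - 1 + σ < m → ∃ C > 0, ∃ ε₀ > 0, ∀ ε ∈ Set.Ioo (0 : ℝ) ε₀,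
      abs ((∫ s in Set.Ioo (0 : ℝ) R, s ^ ((d : ℝ) + σ - 2) / (ε + τ * s ^ m)) /
           (∫ s in Set.Ioo (0 : ℝ) R, s ^ ((d : ℝ) - 2) / (ε + τ * s ^ m)))
        ≤ C * ε ^ (σ / m)) ∧
    (m = (d : ℝ) - 1 + σ → ∃ C > 0, ∃ ε₀ > 0, ∀ ε ∈ Set.Ioo (0 : ℝ) ε₀,
      abs ((∫ s in Set.Ioo (0 : ℝ) R, s ^ ((d : ℝ) + σ - 2) / (ε + τ * s ^ m)) /
           (∫ s in Set.Ioo (0 : ℝ) R, s ^ ((d : ℝ) - 2) / (ε + τ * s ^ m)))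
        ≤ C * ε ^ (σ / m) * |Real.log ε|) ∧
    (m < (d : ℝ) - 1 + σ → ∃ C > 0, ∃ ε₀ > 0, ∀ ε ∈ Set.Ioo (0 : ℝ) ε₀,
      abs ((∫ s in Set.Ioo (0 : ℝ) R, s ^ ((d : ℝ) + σ - 2) / (ε + τ * s ^ m)) /
           (∫ s in Set.Ioo (0 : ℝ) R, s ^ ((d : ℝ) - 2) / (ε + τ * s ^ m)))
        ≤ C * ε ^ (1 - ((d : ℝ) - 1) / m))) := by
  have hd2 : (2:ℝ) ≤ (d:ℝ) := by exact_mod_cast hd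
  have hm0 : (0:ℝ) < m := by linarith
  have hm' : m ≠ 0 := ne_of_gt hm0
  set p : ℝ := (d:ℝ) - 2 with hpdef
  set q : ℝ := (d:ℝ) + σ - 2 with hqdef
  have hp : 0 ≤ p := by simp [hpdef]; linarith
  have hq : 0 ≤ q := by simp [hqdef]; linarith
  have hq1 : 0 < q + 1 := by simp [hqdef]; linarith
  have hp1 : 0 < p + 1 := by simp [hpdef]; linarith
  set c : ℝ := 1 / ((p + 1) * (1 + τ)) with hcdef
  have hc : 0 < c := by positivity
  have hRm : 0 < R ^ m := Real.rpow_pos_of_pos hR m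
  refine ⟨?_, ?_, ?_⟩
  · -- Case 1 : m > d - 1 + σ
    intro hcase
    have hA : q + 1 - m < 0 := by simp [hqdef]; linarith
    set K : ℝ := 1 / (q + 1) + 1 / (τ * (m - (q + 1))) with hKdef
    have hK : 0 < K := by
      have h1 : 0 < m - (q + 1) := by linarith
      positivity
    refine ⟨K / c, by positivity, min (R ^ m) 1, by positivity, ?_⟩
    rintro ε ⟨hε, hε₀⟩
    have hεR : ε ≤ R ^ m := le_of_lt (lt_of_lt_of_le hε₀ (min_le_left _ _))
    have hε1 : ε ≤ 1 := le_of_lt (lt_of_lt_of_le hε₀ (min_le_right _ _))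
    set δ : ℝ := ε ^ (1/m) with hδdef
    have hδ0 : 0 < δ := Real.rpow_pos_of_pos hε _
    have hδpow : ∀ A : ℝ, (ε ^ (1/m) : ℝ) ^ A = ε ^ (A / m) := fun A => by
      rw [← Real.rpow_mul hε.le, one_div, inv_mul_eq_div]
    have hzuIcc : (0:ℝ) ∉ Set.uIcc δ R := Set.notMem_uIcc_of_lt hδ0 hR
    -- tail integral
    have hT : (∫ s in δ..R, s ^ (q - m))
        ≤ ε ^ ((q + 1) / m - 1) / (m - (q + 1)) := by
      rw [integral_rpow (Or.inr ⟨by intro h; rw [sub_eq_iff_eq_add] at h; linarith, hzuIcc⟩)]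
      have h1 : 0 ≤ R ^ (q - m + 1) := Real.rpow_nonneg hR.le _
      have h2 : δ ^ (q - m + 1) = ε ^ ((q + 1) / m - 1) := by
        rw [hδdef, hδpow]
        congr 1
        field_simp; ring
      have h3 : (R ^ (q - m + 1) - δ ^ (q - m + 1)) / (q - m + 1)
          = (δ ^ (q - m + 1) - R ^ (q - m + 1)) / (m - (q + 1)) := by
        have h4 : q - m + 1 ≠ 0 := by linarith
        have h5 : m - (q + 1) ≠ 0 := by linarith
        field_simp
        ring
      rw [h3, h2]
      gcongr
      · linarith
      · linarith [Real.rpow_pos_of_pos hε ((q + 1) / m - 1)]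
    have hNM : (∫ s in Set.Ioo (0:ℝ) R, s ^ q / (ε + τ * s ^ m))
        ≤ K * ε ^ ((q + 1) / m - 1) := by
      have h0 := aux_num_upper hε hτ hm0 hq hR hεR
      have hE : 0 < ε ^ ((q + 1) / m - 1) := Real.rpow_pos_of_pos hε _
      have h1 : (1/τ) * (∫ s in δ..R, s ^ (q - m))
          ≤ (1/τ) * (ε ^ ((q + 1) / m - 1) / (m - (q + 1))) := by
        apply mul_le_mul_of_nonneg_left hT (by positivity)
      calc (∫ s in Set.Ioo (0:ℝ) R, s ^ q / (ε + τ * s ^ m))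
          ≤ ε ^ ((q + 1) / m - 1) / (q + 1) + (1/τ) * ∫ s in δ..R, s ^ (q - m) := h0
        _ ≤ ε ^ ((q + 1) / m - 1) / (q + 1)
            + (1/τ) * (ε ^ ((q + 1) / m - 1) / (m - (q + 1))) := by linarith
        _ = K * ε ^ ((q + 1) / m - 1) := by rw [hKdef]; field_simp
    have hD := aux_den_lower hε hτ hm0 hp hR hεR
    refine aux_ratio_le (by positivity) hD (aux_N_nonneg hε hτ) ?_
    have hexp : ε ^ (σ / m) * ε ^ ((p + 1) / m - 1) = ε ^ ((q + 1) / m - 1) := by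
      rw [← Real.rpow_add hε]
      congr 1
      rw [hqdef, hpdef]
      field_simp; ring
    calc (∫ s in Set.Ioo (0:ℝ) R, s ^ q / (ε + τ * s ^ m))
        ≤ K * ε ^ ((q + 1) / m - 1) := hNM
      _ = K / c * ε ^ (σ / m) * (c * ε ^ ((p + 1) / m - 1)) := by
          rw [mul_comm c, mul_assoc, ← mul_assoc (ε ^ (σ/m)), hexp]
          field_simp
      _ = K / c * ε ^ (σ / m) * (1 / ((p + 1) * (1 + τ)) * ε ^ ((p + 1) / m - 1)) := by
          rw [hcdef]
  · -- Case 2 : m = d - 1 + σ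
    intro hcase
    have hq1m : q + 1 = m := by rw [hqdef]; linarith
    set K : ℝ := 1 / (q + 1) + (1/τ) * (|Real.log R| + 1/m) with hKdef
    have hK : 0 < K := by positivity
    refine ⟨K / c, by positivity, min (R ^ m) (Real.exp (-1)), by positivity, ?_⟩
    rintro ε ⟨hε, hε₀⟩
    have hεR : ε ≤ R ^ m := le_of_lt (lt_of_lt_of_le hε₀ (min_le_left _ _))
    have hεe : ε ≤ Real.exp (-1) := le_of_lt (lt_of_lt_of_le hε₀ (min_le_right _ _))
    have hlogε : Real.log ε ≤ -1 := by
      have := Real.log_le_log hε hεe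
      rwa [Real.log_exp] at this
    set L : ℝ := |Real.log ε| with hLdef
    have habsL : -Real.log ε = L := (abs_of_nonpos (by linarith)).symm
    have hL : 1 ≤ L := by rw [← habsL]; linarith
    set δ : ℝ := ε ^ (1/m) with hδdef
    have hδ0 : 0 < δ := Real.rpow_pos_of_pos hε _
    have hzuIcc : (0:ℝ) ∉ Set.uIcc δ R := Set.notMem_uIcc_of_lt hδ0 hR
    have hzero : (q + 1) / m - 1 = 0 := by rw [hq1m, div_self hm']; ring
    have hT : (∫ s in δ..R, s ^ (q - m)) = Real.log R - (1/m) * Real.log ε := by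
      rw [show q - m = (-1:ℝ) by linarith]
      simp only [Real.rpow_neg_one]
      rw [integral_inv hzuIcc, Real.log_div (ne_of_gt hR) (ne_of_gt hδ0), hδdef,
        Real.log_rpow hε]
    have hNM : (∫ s in Set.Ioo (0:ℝ) R, s ^ q / (ε + τ * s ^ m)) ≤ K * L := by
      have h0 := aux_num_upper hε hτ hm0 hq hR hεR
      rw [hzero, Real.rpow_zero, ← hδdef, hT] at h0
      have habsR : Real.log R ≤ |Real.log R| := le_abs_self _
      have habsR0 : 0 ≤ |Real.log R| := abs_nonneg _
      have e1 : 1 / (q + 1) ≤ 1 / (q + 1) * L :=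
        le_mul_of_one_le_right (by positivity) hL
      have e2 : (1/τ) * (Real.log R - (1/m) * Real.log ε)
          ≤ (1/τ) * ((|Real.log R| + 1/m) * L) := by
        refine mul_le_mul_of_nonneg_left ?_ (by positivity)
        have h7 : |Real.log R| ≤ |Real.log R| * L := le_mul_of_one_le_right habsR0 hL
        calc Real.log R - (1/m) * Real.log ε
            = Real.log R + (1/m) * L := by rw [← habsL]; ring
          _ ≤ |Real.log R| * L + (1/m) * L := by linarith [le_trans habsR h7]
          _ = (|Real.log R| + 1/m) * L := by ring
      calc (∫ s in Set.Ioo (0:ℝ) R, s ^ q / (ε + τ * s ^ m))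
          ≤ 1 / (q + 1) + (1/τ) * (Real.log R - (1/m) * Real.log ε) := h0
        _ ≤ 1 / (q + 1) * L + (1/τ) * ((|Real.log R| + 1/m) * L) := by linarith
        _ = K * L := by rw [hKdef]; ring
    have hD := aux_den_lower hε hτ hm0 hp hR hεR
    refine aux_ratio_le (by positivity) hD (aux_N_nonneg hε hτ) ?_
    have hexp : ε ^ (σ / m) * ε ^ ((p + 1) / m - 1) = 1 := by
      rw [← Real.rpow_add hε, show σ/m + ((p + 1)/m - 1) = (σ + (p+1) - m)/m by
        field_simp; ring, show σ + (p+1) - m = 0 by rw [hpdef]; linarith]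
      simp [Real.rpow_zero]
    calc (∫ s in Set.Ioo (0:ℝ) R, s ^ q / (ε + τ * s ^ m))
        ≤ K * L := hNM
      _ = K / c * ε ^ (σ / m) * L * (1 / ((p + 1) * (1 + τ)) * ε ^ ((p + 1) / m - 1)) := by
          rw [← hcdef, show K / c * ε ^ (σ/m) * L * (c * ε ^ ((p + 1) / m - 1))
            = (K / c * c) * (ε ^ (σ/m) * ε ^ ((p + 1) / m - 1)) * L from by ring,
            hexp, mul_one, div_mul_cancel₀ K (ne_of_gt hc)]
  · -- Case 3 : m < d - 1 + σ
    intro hcase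
    have hA : 0 < q - m + 1 := by rw [hqdef]; linarith
    have hRA : 0 < R ^ (q - m + 1) := Real.rpow_pos_of_pos hR _
    set K : ℝ := 1 / (q + 1) + (1/τ) * (R ^ (q - m + 1) / (q - m + 1)) with hKdef
    have hK : 0 < K := by positivity
    refine ⟨K / c, by positivity, min (R ^ m) 1, by positivity, ?_⟩
    rintro ε ⟨hε, hε₀⟩
    have hεR : ε ≤ R ^ m := le_of_lt (lt_of_lt_of_le hε₀ (min_le_left _ _))
    have hε1 : ε ≤ 1 := le_of_lt (lt_of_lt_of_le hε₀ (min_le_right _ _))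
    set δ : ℝ := ε ^ (1/m) with hδdef
    have hδ0 : 0 < δ := Real.rpow_pos_of_pos hε _
    have hT : (∫ s in δ..R, s ^ (q - m)) ≤ R ^ (q - m + 1) / (q - m + 1) := by
      rw [integral_rpow (Or.inl (by linarith : (-1:ℝ) < q - m))]
      have h1 : 0 ≤ δ ^ (q - m + 1) := Real.rpow_nonneg hδ0.le _
      gcongr
      linarith
    have hone : ε ^ ((q + 1) / m - 1) ≤ 1 := by
      refine Real.rpow_le_one hε.le hε1 ?_
      have : 1 ≤ (q + 1)/m := (one_le_div hm0).2 (by rw [hqdef]; linarith)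
      linarith
    have hNM : (∫ s in Set.Ioo (0:ℝ) R, s ^ q / (ε + τ * s ^ m)) ≤ K := by
      have h0 := aux_num_upper hε hτ hm0 hq hR hεR
      rw [← hδdef] at h0
      have e1 : ε ^ ((q + 1) / m - 1) / (q + 1) ≤ 1 / (q + 1) := by gcongr
      have e2 : (1/τ) * (∫ s in δ..R, s ^ (q - m))
          ≤ (1/τ) * (R ^ (q - m + 1) / (q - m + 1)) :=
        mul_le_mul_of_nonneg_left hT (by positivity)
      rw [hKdef]; linarith
    have hD := aux_den_lower hε hτ hm0 hp hR hεR
    refine aux_ratio_le (by positivity) hD (aux_N_nonneg hε hτ) ?_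
    have hexp : ε ^ (1 - ((d:ℝ) - 1)/m) * ε ^ ((p + 1) / m - 1) = 1 := by
      rw [← Real.rpow_add hε, show 1 - ((d:ℝ) - 1)/m + ((p + 1)/m - 1)
        = ((p + 1) - ((d:ℝ) - 1))/m by field_simp; ring,
        show (p + 1) - ((d:ℝ) - 1) = 0 by rw [hpdef]; ring]
      simp [Real.rpow_zero]
    calc (∫ s in Set.Ioo (0:ℝ) R, s ^ q / (ε + τ * s ^ m))
        ≤ K := hNM
      _ = K / c * ε ^ (1 - ((d:ℝ) - 1)/m)
          * (1 / ((p + 1) * (1 + τ)) * ε ^ ((p + 1) / m - 1)) := by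
          rw [← hcdef, show K / c * ε ^ (1 - ((d:ℝ) - 1)/m) * (c * ε ^ ((p + 1) / m - 1))
            = (K / c * c) * (ε ^ (1 - ((d:ℝ) - 1)/m) * ε ^ ((p + 1) / m - 1)) from by ring,
            hexp, mul_one, div_mul_cancel₀ K (ne_of_gt hc)]
end
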